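/- arXiv:2008.10412 — 2 statements merged into one kernel-verified Lean document; each statement's English description precedes it below -/
import Mathlib

section
/- Let V be a finite-dimensional real inner product space, A : V → V skew-adjoint and invertible, and define J := S⁻¹ ∘ A where S is the positive square root of -A². Then the bilinear form ω(x,y) := g(Ax, y) is compatible with J, i.e. ω(Jx, Jy) = ω(x,y) for all x,y, and ω(x, Jx) > 0 for all x ≠ 0. -/
open scoped RealInnerProductSpace

lemma sqrt_unique' {V : Type*} [NormedAddCommGroup V] [InnerProductSpace ℝ V]
    [FiniteDimensional ℝ V]
    (P Q : V →ₗ[ℝ] V) (hP : P.IsSymmetric) (hQ : Q.IsSymmetric)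
    (hPpos : ∀ x, x ≠ 0 → 0 < ⟪P x, x⟫) (hQpos : ∀ x, x ≠ 0 → 0 < ⟪Q x, x⟫)
    (h : P ∘ₗ P = Q ∘ₗ Q) : P = Q := by
  classical
  have hn : Module.finrank ℝ V = Module.finrank ℝ V := rfl
  apply (hP.eigenvectorBasis hn).toBasis.ext
  intro i
  have hb : P (hP.eigenvectorBasis hn i) =
      (hP.eigenvalues hn i) • hP.eigenvectorBasis hn i := by
    simpa using hP.apply_eigenvectorBasis hn i
  have hv1 : ‖hP.eigenvectorBasis hn i‖ = 1 := (hP.eigenvectorBasis hn).orthonormal.1 i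
  have hv0 : hP.eigenvectorBasis hn i ≠ 0 := by
    intro hv; rw [hv, norm_zero] at hv1; norm_num at hv1
  have hμpos : 0 < hP.eigenvalues hn i := by
    have := hPpos _ hv0
    rw [hb, real_inner_smul_left, real_inner_self_eq_norm_sq, hv1] at this
    simpa using this
  have hQQ : Q (Q (hP.eigenvectorBasis hn i)) =
      (hP.eigenvalues hn i * hP.eigenvalues hn i) • hP.eigenvectorBasis hn i := by
    have h2 := LinearMap.congr_fun h (hP.eigenvectorBasis hn i)
    simp only [LinearMap.comp_apply] at h2
    rw [← h2, hb, map_smul, hb, smul_smul]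
  set μ : ℝ := hP.eigenvalues hn i with hμdef
  set v : V := hP.eigenvectorBasis hn i with hvdef
  set w : V := Q v - μ • v with hwdef
  have hQw : Q w = -(μ • w) := by
    have h3 : Q w + μ • w = 0 := by
      simp only [hwdef, map_sub, map_smul, hQQ, smul_sub, smul_smul]
      abel
    linear_combination (norm := module) h3
  have hw0 : w = 0 := by
    by_contra hw
    have h1 := hQpos w hw
    rw [hQw, inner_neg_left, real_inner_smul_left, real_inner_self_eq_norm_sq] at h1
    have h2 : 0 < ‖w‖ ^ 2 := pow_pos (norm_pos_iff.mpr hw) 2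
    nlinarith
  have hQv : Q v = μ • v := by
    have := sub_eq_zero.mp hw0
    simpa [hwdef] using this
  simp only [OrthonormalBasis.coe_toBasis]
  rw [hb, hQv]

/-- the form `ω(x,y) = ⟪A x, y⟫` is compatible with `J := S⁻¹ ∘ A`:
`ω(Jx, Jy) = ω(x, y)` and `ω(x, Jx) > 0` for `x ≠ 0`. -/
theorem omega_compatible {V : Type*} [NormedAddCommGroup V] [InnerProductSpace ℝ V] [FiniteDimensional ℝ V]
    (A S T : V →ₗ[ℝ] V)
    (hA_skew : LinearMap.adjoint A = -A)
    (hA_inv : Function.Bijective A)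
    (hS_selfadj : LinearMap.adjoint S = S)
    (hS_pos : ∀ x : V, x ≠ 0 → 0 < ⟪S x, x⟫)
    (hS_sq : S ∘ₗ S = -(A ∘ₗ A))
    (hTS : T ∘ₗ S = LinearMap.id) (hST : S ∘ₗ T = LinearMap.id) :
    (∀ x y : V, ⟪A ((T ∘ₗ A) x), (T ∘ₗ A) y⟫ = ⟪A x, y⟫) ∧
      (∀ x : V, x ≠ 0 → 0 < ⟪A x, (T ∘ₗ A) x⟫) := by
  classical
  -- pointwise versions of the hypotheses
  have pSS : ∀ x : V, S (S x) = -(A (A x)) := fun x => by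
    have := LinearMap.congr_fun hS_sq x; simpa using this
  have pTS : ∀ x : V, T (S x) = x := fun x => by
    have := LinearMap.congr_fun hTS x; simpa using this
  have pST : ∀ x : V, S (T x) = x := fun x => by
    have := LinearMap.congr_fun hST x; simpa using this
  -- inner product facts
  have hskew_inner : ∀ u v : V, ⟪A u, v⟫ = -⟪u, A v⟫ := by
    intro u v
    rw [← LinearMap.adjoint_inner_right A u v, hA_skew]
    simp
  have symm_of_adj : ∀ (F : V →ₗ[ℝ] V), LinearMap.adjoint F = F →
      ∀ u v : V, ⟪F u, v⟫ = ⟪u, F v⟫ := by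
    intro F hF u v
    conv_lhs => rw [← hF]
    exact LinearMap.adjoint_inner_left F v u
  -- adjoint of T is T
  have adjid : LinearMap.adjoint (LinearMap.id : V →ₗ[ℝ] V) = LinearMap.id := by
    rw [← Module.End.one_eq_id, ← LinearMap.star_eq_adjoint, star_one]
  have hT_adj : LinearMap.adjoint T = T := by
    have h1 : LinearMap.adjoint T ∘ₗ S = LinearMap.id := by
      have := congrArg LinearMap.adjoint hST
      rwa [LinearMap.adjoint_comp, adjid, hS_selfadj] at this
    ext x
    have := LinearMap.congr_fun h1 (T x)
    simp only [LinearMap.comp_apply, LinearMap.id_apply] at this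
    rw [pST x] at this
    simpa using this
  -- injectivity of S
  have hS_inj : ∀ y : V, S y = 0 → y = 0 := by
    intro y hy
    by_contra h0
    have := hS_pos y h0
    rw [hy] at this
    simp at this
  -- the inverse B of A
  set e := LinearEquiv.ofBijective A hA_inv with hedef
  set B : V →ₗ[ℝ] V := (e.symm : V →ₗ[ℝ] V) with hBdef
  have pBA : ∀ x : V, B (A x) = x := fun x => e.symm_apply_apply x
  have pAB : ∀ x : V, A (B x) = x := fun x => e.apply_symm_apply x
  -- adjoint of B is -B
  have hB_adj : LinearMap.adjoint B = -B := by
    have hAB : A ∘ₗ B = LinearMap.id := by ext x; exact pAB x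
    have h1 : LinearMap.adjoint B ∘ₗ LinearMap.adjoint A = LinearMap.id := by
      rw [← LinearMap.adjoint_comp, hAB, adjid]
    rw [hA_skew] at h1
    ext x
    have := LinearMap.congr_fun h1 (B x)
    simp only [LinearMap.comp_apply, LinearMap.neg_apply, LinearMap.id_apply, map_neg] at this ⊢
    rw [pAB x] at this
    linear_combination (norm := module) -this
  -- Q := A ∘ S ∘ B
  set Q : V →ₗ[ℝ] V := (A ∘ₗ S) ∘ₗ B with hQdef
  have pcomm : ∀ y : V, A (A (S y)) = S (A (A y)) := by
    intro y
    rw [← neg_neg (A (A (S y))), ← pSS (S y), pSS y]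
    simp
  have key : ∀ x : V, B (S (A x)) = A (S (B x)) := by
    intro x
    apply hA_inv.1
    rw [pAB]
    have := pcomm (B x)
    rw [pAB x] at this
    exact this.symm
  have hQ_adj : LinearMap.adjoint Q = Q := by
    rw [hQdef, LinearMap.adjoint_comp, LinearMap.adjoint_comp, hA_skew, hS_selfadj, hB_adj]
    ext x
    simp only [LinearMap.comp_apply, LinearMap.neg_apply, map_neg, neg_neg]
    exact key x
  have hQ_symm : Q.IsSymmetric := fun u v => symm_of_adj Q hQ_adj u v
  have hS_symm : S.IsSymmetric := fun u v => symm_of_adj S hS_selfadj u v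
  have hQ_pos : ∀ x : V, x ≠ 0 → 0 < ⟪Q x, x⟫ := by
    intro x hx
    have hBx : B x ≠ 0 := by
      intro h0
      apply hx
      rw [← pAB x, h0, map_zero]
    have hSBx : S (B x) ≠ 0 := fun h0 => hBx (hS_inj _ h0)
    have hQx : Q x = A (S (B x)) := rfl
    calc (0:ℝ) < ⟪S (S (B x)), S (B x)⟫ := hS_pos _ hSBx
      _ = ⟪S (B x), S (S (B x))⟫ := real_inner_comm _ _
      _ = ⟪S (B x), -(A (A (B x)))⟫ := by rw [pSS]
      _ = -⟪S (B x), A (A (B x))⟫ := by rw [inner_neg_right]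
      _ = ⟪A (S (B x)), A (B x)⟫ := by rw [hskew_inner (S (B x)) (A (B x))]
      _ = ⟪Q x, x⟫ := by rw [hQx, pAB]
  have hQQ : S ∘ₗ S = Q ∘ₗ Q := by
    ext x
    simp only [LinearMap.comp_apply, hQdef]
    rw [pBA, pSS (B x), map_neg, pAB, ← pSS x]
  have hSQ : S = Q := sqrt_unique' S Q hS_symm hQ_symm hS_pos hQ_pos hQQ
  -- commutation
  have hSA : ∀ x : V, S (A x) = A (S x) := by
    intro x
    have := LinearMap.congr_fun hSQ (A x)
    simp only [hQdef, LinearMap.comp_apply] at this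
    rw [pBA] at this
    exact this
  have hTA : ∀ x : V, T (A x) = A (T x) := by
    intro x
    have h1 : T (A x) = T (A (S (T x))) := by rw [pST]
    rw [h1, ← hSA (T x), pTS]
  constructor
  · intro x y
    have hTsymm : ∀ u v : V, ⟪u, T v⟫ = ⟪T u, v⟫ := fun u v =>
      (symm_of_adj T hT_adj u v).symm
    rw [LinearMap.comp_apply, LinearMap.comp_apply, hTsymm]
    have h4 : S (S (T (T x))) = x := by rw [pST, pST]
    have hkey : T (A (T (A x))) = -x := by
      rw [hTA x, hTA (A (T x)), hTA (T x)]
      conv_rhs => rw [← h4, pSS]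
      rw [neg_neg]
    rw [hkey, hskew_inner x y]
    simp
  · intro x hx
    have hAx : A x ≠ 0 := by
      intro h0
      apply hx
      exact hA_inv.1 (by rw [h0, map_zero])
    have hz : T (A x) ≠ 0 := by
      intro h0
      apply hAx
      rw [← pST (A x), h0, map_zero]
    have : A x = S (T (A x)) := (pST (A x)).symm
    rw [LinearMap.comp_apply]
    calc (0:ℝ) < ⟪S (T (A x)), T (A x)⟫ := hS_pos _ hz
      _ = ⟪A x, T (A x)⟫ := by rw [← this]
end

section
/- Let V be a finite-dimensional real inner product space, σ an isometric linear involution of V, and A a skew-adjoint invertible linear map anticommuting with σ. Then J := S⁻¹ ∘ A anticommutes with σ, where S is the positive square root of -A². -/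
open scoped RealInnerProductSpace

/-- `J := S⁻¹ ∘ A` anticommutes with `σ`. -/
theorem J_anticomm_sigma {V : Type*} [NormedAddCommGroup V] [InnerProductSpace ℝ V] [FiniteDimensional ℝ V]
    (A S T : V →ₗ[ℝ] V)
    (hA_skew : LinearMap.adjoint A = -A)
    (hA_inv : Function.Bijective A)
    (hS_selfadj : LinearMap.adjoint S = S)
    (hS_pos : ∀ x : V, x ≠ 0 → 0 < ⟪S x, x⟫)
    (hS_sq : S ∘ₗ S = -(A ∘ₗ A))
    (hTS : T ∘ₗ S = LinearMap.id) (hST : S ∘ₗ T = LinearMap.id)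
    (σ : V →ₗ[ℝ] V)
    (hσ_invol : σ ∘ₗ σ = LinearMap.id)
    (hσ_isom : ∀ x y : V, ⟪σ x, σ y⟫ = ⟪x, y⟫)
    (hAσ_anticomm : A ∘ₗ σ = -(σ ∘ₗ A)) :
    (T ∘ₗ A) ∘ₗ σ = -(σ ∘ₗ (T ∘ₗ A)) := by
  set D : V →ₗ[ℝ] V := S ∘ₗ S with hD
  have hS_symm : S.IsSymmetric := by
    intro x y
    nth_rewrite 1 [← hS_selfadj]
    exact LinearMap.adjoint_inner_left S y x
  have hD_symm : D.IsSymmetric := by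
    intro x y
    exact (hS_symm (S x) y).trans (hS_symm x (S y))
  -- D commutes with σ
  have hDσ : ∀ x : V, D (σ x) = σ (D x) := by
    have h1 : ∀ x : V, A (σ x) = -σ (A x) := by
      intro x
      have := LinearMap.congr_fun hAσ_anticomm x
      simpa using this
    intro x
    have e1 : D (σ x) = -(A (A (σ x))) := by rw [hS_sq]; simp
    have e2 : D x = -(A (A x)) := by rw [hS_sq]; simp
    rw [e1, e2, h1 x, map_neg, neg_neg, h1 (A x), map_neg]
  -- On eigenspaces of D, S acts as sqrt of the eigenvalue
  have key : ∀ (μ : ℝ) (x : V), x ∈ Module.End.eigenspace D μ → S x = Real.sqrt μ • x := by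
    intro μ x hx
    have hDx : D x = μ • x := by
      simpa [Module.End.mem_eigenspace_iff] using hx
    rcases eq_or_ne x 0 with rfl | hx0
    · simp
    have hμ : 0 ≤ μ := by
      have h1 : ⟪D x, x⟫ = ⟪S x, S x⟫ := by
        simp only [hD, LinearMap.comp_apply]
        rw [hS_symm]
      have h2 : μ * ⟪x, x⟫ = ⟪S x, S x⟫ := by
        rw [← h1, hDx, real_inner_smul_left]
      have hxx : (0:ℝ) < ⟪x, x⟫ := by
        rw [real_inner_self_eq_norm_sq]
        exact pow_pos (norm_pos_iff.mpr hx0) 2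
      nlinarith [real_inner_self_nonneg (x := S x)]
    set c := Real.sqrt μ with hc
    have hc2 : c * c = μ := Real.mul_self_sqrt hμ
    have hc0 : 0 ≤ c := Real.sqrt_nonneg μ
    set y := S x - c • x with hy
    have hSy : S y = -(c • y) := by
      have hSSx : S (S x) = μ • x := by
        have := LinearMap.congr_fun hD x
        simp only [LinearMap.comp_apply] at this
        rw [← this, hDx]
      simp only [hy, map_sub, map_smul, hSSx, smul_sub, smul_smul, hc2]
      module
    have hy0 : y = 0 := by
      by_contra h
      have h1 : (0:ℝ) < ⟪S y, y⟫ := hS_pos y h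
      rw [hSy, inner_neg_left, real_inner_smul_left] at h1
      have hyy : (0:ℝ) ≤ ⟪y, y⟫ := real_inner_self_nonneg
      nlinarith
    have := sub_eq_zero.mp hy0
    simpa [hc] using this
  -- S commutes with σ
  have hSσ : ∀ x : V, S (σ x) = σ (S x) := by
    intro x
    have hx : x ∈ (⊤ : Submodule ℝ V) := trivial
    have htop : (⨆ μ, Module.End.eigenspace D μ) = ⊤ := by
      have := hD_symm.orthogonalComplement_iSup_eigenspaces_eq_bot
      exact Submodule.orthogonal_eq_bot_iff.mp this
    rw [← htop] at hx
    induction hx using Submodule.iSup_induction' with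
    | mem μ z hz =>
        have h1 : S z = Real.sqrt μ • z := key μ z hz
        have h2 : σ z ∈ Module.End.eigenspace D μ := by
          rw [Module.End.mem_eigenspace_iff] at hz ⊢
          rw [hDσ, hz, map_smul]
        have h3 : S (σ z) = Real.sqrt μ • σ z := key μ (σ z) h2
        rw [h3, h1, map_smul]
    | zero => simp
    | add z w hz hw ihz ihw => simp [map_add, ihz, ihw]
  -- T commutes with σ
  have hTσ : ∀ x : V, T (σ x) = σ (T x) := by
    intro x
    have h1 : S (T (σ x)) = σ x := LinearMap.congr_fun hST (σ x)
    have h2 : S (σ (T x)) = σ (S (T x)) := hSσ (T x)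
    have h3 : S (T x) = x := LinearMap.congr_fun hST x
    have h4 : S (σ (T x)) = σ x := by rw [h2, h3]
    have hSinj : Function.Injective S := by
      intro a b hab
      have := congrArg T hab
      have ha : T (S a) = a := LinearMap.congr_fun hTS a
      have hb : T (S b) = b := LinearMap.congr_fun hTS b
      rwa [ha, hb] at this
    exact hSinj (h1.trans h4.symm)
  ext x
  have h1 : A (σ x) = -σ (A x) := by
    have := LinearMap.congr_fun hAσ_anticomm x
    simpa using this
  simp only [LinearMap.comp_apply, LinearMap.neg_apply, h1, map_neg, hTσ]
end
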